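/- arXiv:2307.12599 — 2 statements merged into one kernel-verified Lean document; each statement's English description precedes it below -/
import Mathlib

section
/- For all real numbers c1, c2, c3 and each j ∈ {1,2,3,4}, U_d(c1,c2,c3)·Ψ_j = e^{i h_j/2}·Ψ_j, i.e. the magic basis vectors are eigenvectors of U_d(c1,c2,c3) with eigenvalues e^{i h_j/2}. -/
open Matrix Complex
open scoped Matrix Kronecker

noncomputable section

/-- Pauli matrices -/
def σx : Matrix (Fin 2) (Fin 2) ℂ := !![0, 1; 1, 0]
def σy : Matrix (Fin 2) (Fin 2) ℂ := !![0, -Complex.I; Complex.I, 0]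
def σz : Matrix (Fin 2) (Fin 2) ℂ := !![1, 0; 0, -1]

/-- H(c₁,c₂,c₃) = c₁ σx⊗σx + c₂ σy⊗σy + c₃ σz⊗σz -/
def Hmat (c1 c2 c3 : ℝ) : Matrix (Fin 2 × Fin 2) (Fin 2 × Fin 2) ℂ :=
  (c1 : ℂ) • (σx ⊗ₖ σx) + (c2 : ℂ) • (σy ⊗ₖ σy) + (c3 : ℂ) • (σz ⊗ₖ σz)

/-- U_d(c₁,c₂,c₃) = exp(i H(c₁,c₂,c₃)/2) (matrix exponential) -/
def Ud (c1 c2 c3 : ℝ) : Matrix (Fin 2 × Fin 2) (Fin 2 × Fin 2) ℂ :=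
  NormedSpace.exp ((Complex.I / 2) • Hmat c1 c2 c3)

/-- h₁ = c₁−c₂+c₃, h₂ = c₁+c₂−c₃, h₃ = −c₁−c₂−c₃, h₄ = −c₁+c₂+c₃ -/
def hval (c1 c2 c3 : ℝ) : Fin 4 → ℝ :=
  ![c1 - c2 + c3, c1 + c2 - c3, -c1 - c2 - c3, -c1 + c2 + c3]

/-- computational basis vector |ab⟩ of ℂ⁴ = ℂ²⊗ℂ², indexed by pairs -/
def ket (a b : Fin 2) : Fin 2 × Fin 2 → ℂ := fun p => if p = (a, b) then 1 else 0

/-- the magic basis Ψ₁, Ψ₂, Ψ₃, Ψ₄ -/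
def Psi : Fin 4 → (Fin 2 × Fin 2 → ℂ) :=
  ![((Real.sqrt 2 : ℂ))⁻¹ • (ket 0 0 + ket 1 1),
    (Complex.I * ((Real.sqrt 2 : ℂ))⁻¹) • (ket 0 1 + ket 1 0),
    ((Real.sqrt 2 : ℂ))⁻¹ • (ket 0 1 - ket 1 0),
    (Complex.I * ((Real.sqrt 2 : ℂ))⁻¹) • (ket 0 0 - ket 1 1)]

attribute [local instance] Matrix.linftyOpNormedRing Matrix.linftyOpNormedAlgebra

lemma exp_mulVec_eigen {n : Type*} [Fintype n] [DecidableEq n]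
    (A : Matrix n n ℂ) (v : n → ℂ) (μ : ℂ) (h : A.mulVec v = μ • v) :
    (NormedSpace.exp A).mulVec v = Complex.exp μ • v := by
  have hpow : ∀ k : ℕ, (A ^ k).mulVec v = μ ^ k • v := by
    intro k
    induction k with
    | zero => simp [Matrix.one_mulVec]
    | succ k ih =>
      rw [pow_succ', pow_succ', ← Matrix.mulVec_mulVec, ih, Matrix.mulVec_smul, h, smul_smul,
        mul_comm]
  let L : Matrix n n ℂ →ₗ[ℂ] (n → ℂ) :=
    { toFun := fun M => M.mulVec v
      map_add' := fun M N => Matrix.add_mulVec M N v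
      map_smul' := fun c M => (Matrix.smul_mulVec c M v) }
  have hLc : Continuous L := L.continuous_of_finiteDimensional
  have hsum : Summable fun k : ℕ => ((Nat.factorial k : ℂ))⁻¹ • A ^ k :=
    NormedSpace.expSeries_summable' (𝕂 := ℂ) A
  have : (NormedSpace.exp A).mulVec v
      = ∑' k : ℕ, ((Nat.factorial k : ℂ))⁻¹ • (A ^ k).mulVec v := by
    rw [NormedSpace.exp_eq_tsum ℂ]
    have := hsum.hasSum.map L hLc
    refine this.tsum_eq.symm.trans ?_
    congr 1
    ext k
    simp [L, Matrix.smul_mulVec]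
  rw [this]
  have : ∀ k : ℕ, ((Nat.factorial k : ℂ))⁻¹ • (A ^ k).mulVec v
      = (((Nat.factorial k : ℂ))⁻¹ * μ ^ k) • v := by
    intro k; rw [hpow k, smul_smul]
  simp_rw [this]
  rw [Summable.tsum_smul_const (by simpa [smul_eq_mul] using NormedSpace.expSeries_summable' (𝕂 := ℂ) μ)]
  congr 1
  rw [Complex.exp_eq_exp_ℂ, NormedSpace.exp_eq_tsum ℂ]
  simp [smul_eq_mul]

set_option maxHeartbeats 1000000 in
lemma Hmat_eigen (c1 c2 c3 : ℝ) (j : Fin 4) :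
    (Hmat c1 c2 c3).mulVec (Psi j) = ((hval c1 c2 c3 j : ℝ) : ℂ) • Psi j := by
  fin_cases j <;> (funext p; obtain ⟨a, b⟩ := p) <;> fin_cases a <;> fin_cases b <;>
    simp [Hmat, Psi, ket, hval, Matrix.mulVec, dotProduct,
      Fintype.sum_prod_type, Fin.sum_univ_two, σx, σy, σz,
      Matrix.kroneckerMap_apply, Pi.smul_apply, smul_eq_mul, Prod.mk.injEq,
      -Prod.mk_zero_zero, -Prod.mk_one_one]
  all_goals ring

/-- The magic basis vectors are eigenvectors of U_d(c₁,c₂,c₃) with eigenvalues e^{i h_j/2}. -/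
theorem stmt2 (c1 c2 c3 : ℝ) (j : Fin 4) :
    (Ud c1 c2 c3).mulVec (Psi j) =
      Complex.exp (Complex.I * (hval c1 c2 c3 j : ℂ) / 2) • Psi j := by
  have h : ((Complex.I / 2) • Hmat c1 c2 c3).mulVec (Psi j)
      = (Complex.I * (hval c1 c2 c3 j : ℂ) / 2) • Psi j := by
    rw [Matrix.smul_mulVec, Hmat_eigen, smul_smul]
    congr 1
    ring
  exact exp_mulVec_eigen _ _ _ h
end
end

section
/- For all real numbers c1, c2, c3 and all j, k ∈ {1,2,3,4} with j ≠ k, the concurrence of the state U_d(c1,c2,c3)·ψ±_jk, where ψ±_jk = (Ψ_j ± i Ψ_k)/√2, equals (1/2)|e^{i h_j} − e^{i h_k}|, i.e. half the length L_jk of the chord joining e^{i h_j} and e^{i h_k} on the unit circle; equivalently, the squared concurrence equals (2 − 2cos(h_j − h_k))/4. -/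
open Matrix Complex
open scoped Matrix Kronecker

set_option linter.unreachableTactic false
set_option linter.unusedTactic false
set_option maxHeartbeats 1000000

noncomputable section

/-- concurrence C = 2|αδ − βγ| of a two-qubit state with components (α,β,γ,δ) -/
def conc (v : Fin 2 × Fin 2 → ℂ) : ℝ :=
  2 * ‖v (0, 0) * v (1, 1) - v (0, 1) * v (1, 0)‖

/-! ### Auxiliary machinery -/

abbrev Idx := Fin 2 × Fin 2

def idx4 : Idx → Fin 4 := fun p => ![![0,1],![2,3]] p.1 p.2

def Pm : Matrix Idx Idx ℂ :=
  (!![1,0,0,Complex.I; 0,Complex.I,1,0; 0,Complex.I,-1,0; 1,0,0,-Complex.I]).submatrix idx4 idx4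

def Qm : Matrix Idx Idx ℂ :=
  ((2:ℂ)⁻¹ • !![1,0,0,1; 0,-Complex.I,-Complex.I,0; 0,1,-1,0; -Complex.I,0,0,Complex.I]).submatrix idx4 idx4

theorem hPQ : Pm * Qm = 1 := by
  ext ⟨a,b⟩ ⟨c,d⟩
  fin_cases a <;> fin_cases b <;> fin_cases c <;> fin_cases d <;>
    simp [Pm, Qm, Matrix.mul_apply, Fintype.sum_prod_type, Fin.sum_univ_two, idx4,
      Matrix.one_apply, Prod.ext_iff] <;>
    (ring_nf; try rw [Complex.I_sq]; try norm_num)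

theorem hQP : Qm * Pm = 1 := by
  ext ⟨a,b⟩ ⟨c,d⟩
  fin_cases a <;> fin_cases b <;> fin_cases c <;> fin_cases d <;>
    simp [Pm, Qm, Matrix.mul_apply, Fintype.sum_prod_type, Fin.sum_univ_two, idx4,
      Matrix.one_apply, Prod.ext_iff] <;>
    (ring_nf; try rw [Complex.I_sq]; try norm_num)

def Pu : (Matrix Idx Idx ℂ)ˣ := ⟨Pm, Qm, hPQ, hQP⟩

theorem Ud_eq (c1 c2 c3 : ℝ) :
    Ud c1 c2 c3 = Pm * Matrix.diagonal
      (fun p => Complex.exp (Complex.I * (hval c1 c2 c3 (idx4 p)) / 2)) * Qm := by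
  have hHP : ((Complex.I / 2) • Hmat c1 c2 c3) * Pm
      = Pm * Matrix.diagonal (fun p => Complex.I * (hval c1 c2 c3 (idx4 p)) / 2) := by
    ext ⟨a,b⟩ ⟨c,d⟩
    fin_cases a <;> fin_cases b <;> fin_cases c <;> fin_cases d <;>
      simp [Pm, Hmat, σx, σy, σz, hval, idx4, Matrix.mul_apply, Fintype.sum_prod_type,
        Fin.sum_univ_two, Matrix.diagonal, Matrix.kroneckerMap_apply, Prod.ext_iff] <;>
      ring
  have hH : (Complex.I / 2) • Hmat c1 c2 c3
      = Pm * Matrix.diagonal (fun p => Complex.I * (hval c1 c2 c3 (idx4 p)) / 2) * Qm := by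
    calc (Complex.I / 2) • Hmat c1 c2 c3
        = ((Complex.I / 2) • Hmat c1 c2 c3) * (Pm * Qm) := by rw [hPQ, mul_one]
      _ = (((Complex.I / 2) • Hmat c1 c2 c3) * Pm) * Qm := by rw [mul_assoc]
      _ = _ := by rw [hHP]
  rw [Ud, hH]
  have h1 : Pm * Matrix.diagonal (fun p => Complex.I * (hval c1 c2 c3 (idx4 p)) / 2) * Qm
      = (Pu : Matrix Idx Idx ℂ) * Matrix.diagonal (fun p => Complex.I * (hval c1 c2 c3 (idx4 p)) / 2)
        * (↑Pu⁻¹ : Matrix Idx Idx ℂ) := rfl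
  rw [h1, Matrix.exp_units_conj Pu, Matrix.exp_diagonal, Pi.exp_def]
  simp only [← Complex.exp_eq_exp_ℂ]
  rfl

theorem hQpsi (j : Fin 4) : Qm.mulVec (Psi j)
    = fun p => if idx4 p = j then ((Real.sqrt 2 : ℂ))⁻¹ else 0 := by
  funext p; obtain ⟨a,b⟩ := p
  fin_cases j <;> fin_cases a <;> fin_cases b <;>
    simp [Qm, Psi, ket, idx4, Matrix.mulVec, dotProduct, Fintype.sum_prod_type,
      Fin.sum_univ_two, Prod.ext_iff] <;>
    (ring_nf; try rw [Complex.I_sq]; try ring_nf; try norm_num)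

theorem hPcol (c : ℂ) (j : Fin 4) :
    Pm.mulVec (fun p => if idx4 p = j then c * ((Real.sqrt 2 : ℂ))⁻¹ else 0) = c • Psi j := by
  funext p; obtain ⟨a,b⟩ := p
  fin_cases j <;> fin_cases a <;> fin_cases b <;>
    simp [Pm, Psi, ket, idx4, Matrix.mulVec, dotProduct, Fintype.sum_prod_type,
      Fin.sum_univ_two, Prod.ext_iff] <;>
    ring

theorem eig (c1 c2 c3 : ℝ) (j : Fin 4) :
    (Ud c1 c2 c3).mulVec (Psi j)
      = Complex.exp (Complex.I * (hval c1 c2 c3 j) / 2) • Psi j := by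
  rw [Ud_eq, ← Matrix.mulVec_mulVec, ← Matrix.mulVec_mulVec, hQpsi]
  have hD : (Matrix.diagonal
        (fun p => Complex.exp (Complex.I * (hval c1 c2 c3 (idx4 p)) / 2))).mulVec
      (fun p => if idx4 p = j then ((Real.sqrt 2 : ℂ))⁻¹ else 0)
      = fun p => if idx4 p = j
          then Complex.exp (Complex.I * (hval c1 c2 c3 j) / 2) * ((Real.sqrt 2 : ℂ))⁻¹
          else 0 := by
    funext p
    rw [Matrix.mulVec_diagonal]
    split_ifs with h
    · rw [h]
    · ring
  rw [hD, hPcol]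

theorem hs2 : ((Real.sqrt 2 : ℂ))⁻¹ * ((Real.sqrt 2 : ℂ))⁻¹ = 2⁻¹ := by
  rw [← mul_inv, ← Complex.ofReal_mul, Real.mul_self_sqrt (by norm_num)]
  norm_num

theorem conc_combo (a b : ℂ) (j k : Fin 4) (hjk : j ≠ k) :
    conc (a • Psi j + b • Psi k) = ‖a ^ 2 + b ^ 2‖ := by
  have key : (a • Psi j + b • Psi k) (0,0) * (a • Psi j + b • Psi k) (1,1)
      - (a • Psi j + b • Psi k) (0,1) * (a • Psi j + b • Psi k) (1,0)
      = (a ^ 2 + b ^ 2) * 2⁻¹ := by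
    fin_cases j <;> fin_cases k <;>
      first
        | exact absurd rfl hjk
        | (simp [Psi, ket, Prod.ext_iff]
           first
             | linear_combination (a^2+b^2) * hs2
             | linear_combination (a^2+b^2) * hs2
                 - (a^2 * (((Real.sqrt 2:ℂ))⁻¹ * ((Real.sqrt 2:ℂ))⁻¹)) * Complex.I_sq
             | linear_combination (a^2+b^2) * hs2
                 - (b^2 * (((Real.sqrt 2:ℂ))⁻¹ * ((Real.sqrt 2:ℂ))⁻¹)) * Complex.I_sq
             | linear_combination (a^2+b^2) * hs2
                 - ((a^2+b^2) * (((Real.sqrt 2:ℂ))⁻¹ * ((Real.sqrt 2:ℂ))⁻¹)) * Complex.I_sq)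
  rw [conc, key, norm_mul, norm_inv, Complex.norm_two]; ring

theorem chord (x y : ℝ) :
    (‖Complex.exp (Complex.I * x) - Complex.exp (Complex.I * y)‖) ^ 2
      = 2 - 2 * Real.cos (x - y) := by
  rw [Complex.sq_norm]
  have h : Complex.exp (Complex.I * x) - Complex.exp (Complex.I * y)
      = ((Real.cos x - Real.cos y : ℝ) : ℂ) + ((Real.sin x - Real.sin y : ℝ) : ℂ) * Complex.I := by
    rw [mul_comm Complex.I (x:ℂ), mul_comm Complex.I (y:ℂ), Complex.exp_mul_I,
      Complex.exp_mul_I, ← Complex.ofReal_cos, ← Complex.ofReal_cos, ← Complex.ofReal_sin,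
      ← Complex.ofReal_sin]
    push_cast; ring
  rw [h, Complex.normSq_add_mul_I, Real.cos_sub]
  nlinarith [Real.sin_sq_add_cos_sq x, Real.sin_sq_add_cos_sq y]

theorem key2 (Ej Ek : ℂ) :
    (((Real.sqrt 2:ℂ))⁻¹ * Ej) ^ 2 + (((Real.sqrt 2:ℂ))⁻¹ * Complex.I * Ek) ^ 2
      = (Ej ^ 2 - Ek ^ 2) * 2⁻¹ := by
  linear_combination (Ej^2 - Ek^2) * hs2
    + (Ek^2 * (((Real.sqrt 2:ℂ))⁻¹ * ((Real.sqrt 2:ℂ))⁻¹)) * Complex.I_sq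

theorem exp_half_sq (x : ℝ) :
    Complex.exp (Complex.I * x / 2) ^ 2 = Complex.exp (Complex.I * x) := by
  rw [sq, ← Complex.exp_add]
  congr 1; ring

/-- The concurrence of U_d(c₁,c₂,c₃)·ψ±_jk equals half the chord length
L_jk = |e^{i h_j} − e^{i h_k}|; equivalently its square is (2 − 2cos(h_j − h_k))/4. -/
theorem stmt5 (c1 c2 c3 : ℝ) (j k : Fin 4) (hjk : j ≠ k)
    (ψp ψm : Fin 2 × Fin 2 → ℂ)
    (hψp : ψp = ((Real.sqrt 2 : ℂ))⁻¹ • (Psi j + Complex.I • Psi k))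
    (hψm : ψm = ((Real.sqrt 2 : ℂ))⁻¹ • (Psi j - Complex.I • Psi k)) :
    conc ((Ud c1 c2 c3).mulVec ψp) =
      (1 / 2 : ℝ) * ‖Complex.exp (Complex.I * (hval c1 c2 c3 j : ℂ)) -
        Complex.exp (Complex.I * (hval c1 c2 c3 k : ℂ))‖ ∧
    conc ((Ud c1 c2 c3).mulVec ψm) =
      (1 / 2 : ℝ) * ‖Complex.exp (Complex.I * (hval c1 c2 c3 j : ℂ)) -
        Complex.exp (Complex.I * (hval c1 c2 c3 k : ℂ))‖ ∧
    conc ((Ud c1 c2 c3).mulVec ψp) ^ 2 =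
      (2 - 2 * Real.cos (hval c1 c2 c3 j - hval c1 c2 c3 k)) / 4 ∧
    conc ((Ud c1 c2 c3).mulVec ψm) ^ 2 =
      (2 - 2 * Real.cos (hval c1 c2 c3 j - hval c1 c2 c3 k)) / 4 := by
  subst hψp; subst hψm
  have hEj := eig c1 c2 c3 j
  have hEk := eig c1 c2 c3 k
  have hvp : (Ud c1 c2 c3).mulVec (((Real.sqrt 2 : ℂ))⁻¹ • (Psi j + Complex.I • Psi k))
      = (((Real.sqrt 2 : ℂ))⁻¹ * Complex.exp (Complex.I * (hval c1 c2 c3 j) / 2)) • Psi j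
        + (((Real.sqrt 2 : ℂ))⁻¹ * Complex.I * Complex.exp (Complex.I * (hval c1 c2 c3 k) / 2)) • Psi k := by
    rw [Matrix.mulVec_smul, Matrix.mulVec_add, Matrix.mulVec_smul, hEj, hEk]
    funext p
    simp only [Pi.smul_apply, Pi.add_apply, smul_eq_mul]
    ring
  have hvm : (Ud c1 c2 c3).mulVec (((Real.sqrt 2 : ℂ))⁻¹ • (Psi j - Complex.I • Psi k))
      = (((Real.sqrt 2 : ℂ))⁻¹ * Complex.exp (Complex.I * (hval c1 c2 c3 j) / 2)) • Psi j
        + (-(((Real.sqrt 2 : ℂ))⁻¹ * Complex.I * Complex.exp (Complex.I * (hval c1 c2 c3 k) / 2))) • Psi k := by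
    rw [Matrix.mulVec_smul, Matrix.mulVec_sub, Matrix.mulVec_smul, hEj, hEk]
    funext p
    simp only [Pi.smul_apply, Pi.add_apply, Pi.sub_apply, smul_eq_mul]
    ring
  have habs : ‖(Complex.exp (Complex.I * (hval c1 c2 c3 j)) -
        Complex.exp (Complex.I * (hval c1 c2 c3 k))) * 2⁻¹‖
      = (1 / 2 : ℝ) * ‖Complex.exp (Complex.I * (hval c1 c2 c3 j : ℂ)) -
        Complex.exp (Complex.I * (hval c1 c2 c3 k : ℂ))‖ := by
    rw [norm_mul, norm_inv, Complex.norm_two]; ring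
  have keyp : (((Real.sqrt 2 : ℂ))⁻¹ * Complex.exp (Complex.I * (hval c1 c2 c3 j) / 2)) ^ 2
      + (((Real.sqrt 2 : ℂ))⁻¹ * Complex.I * Complex.exp (Complex.I * (hval c1 c2 c3 k) / 2)) ^ 2
      = (Complex.exp (Complex.I * (hval c1 c2 c3 j)) -
          Complex.exp (Complex.I * (hval c1 c2 c3 k))) * 2⁻¹ := by
    rw [← exp_half_sq (hval c1 c2 c3 j), ← exp_half_sq (hval c1 c2 c3 k)]
    exact key2 _ _
  have keym : (((Real.sqrt 2 : ℂ))⁻¹ * Complex.exp (Complex.I * (hval c1 c2 c3 j) / 2)) ^ 2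
      + (-(((Real.sqrt 2 : ℂ))⁻¹ * Complex.I * Complex.exp (Complex.I * (hval c1 c2 c3 k) / 2))) ^ 2
      = (Complex.exp (Complex.I * (hval c1 c2 c3 j)) -
          Complex.exp (Complex.I * (hval c1 c2 c3 k))) * 2⁻¹ := by
    rw [neg_sq]; exact keyp
  have cp : conc ((Ud c1 c2 c3).mulVec (((Real.sqrt 2 : ℂ))⁻¹ • (Psi j + Complex.I • Psi k)))
      = (1 / 2 : ℝ) * ‖Complex.exp (Complex.I * (hval c1 c2 c3 j : ℂ)) -
        Complex.exp (Complex.I * (hval c1 c2 c3 k : ℂ))‖ := by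
    rw [hvp, conc_combo _ _ j k hjk, keyp, habs]
  have cm : conc ((Ud c1 c2 c3).mulVec (((Real.sqrt 2 : ℂ))⁻¹ • (Psi j - Complex.I • Psi k)))
      = (1 / 2 : ℝ) * ‖Complex.exp (Complex.I * (hval c1 c2 c3 j : ℂ)) -
        Complex.exp (Complex.I * (hval c1 c2 c3 k : ℂ))‖ := by
    rw [hvm, conc_combo _ _ j k hjk, keym, habs]
  refine ⟨cp, cm, ?_, ?_⟩ <;>
    [rw [cp]; rw [cm]] <;>
    rw [mul_pow, chord] <;> ring

end
end
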